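/- arXiv:2303.07222 — 7 statements merged into one kernel-verified Lean document; each statement's English description precedes it below -/
import Mathlib

section
/- Let $T>0$, $u_0\in\mathbb{C}$ with $\Re(u_0)\le 0$, and let $a,b,c:[0,T]\to\mathbb{C}$ be measurable bounded functions with $\Im(a(t))=0$, $a(t)>0$, and $\Re(c(t)) + \Im(b(t))^2/(4a(t)) \le 0$ for all $t\le T$. Then any solution $\psi:[0,t^*]\to\mathbb{C}$ of the Riccati ODE $\psi'(t)=a(t)\psi(t)^2+b(t)\psi(t)+c(t)$, $\psi(0)=u_0$, satisfies $\Re(\psi(t))\le 0$ for all $t$ in its interval of existence. -/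
open MeasureTheory Set Topology Filter

/-- Any solution of the complex Riccati ODE with the stated sign conditions on the
coefficients has nonpositive real part on its interval of existence. -/
theorem stmt0 (T : ℝ) (hT : 0 < T) (u0 : ℂ) (hu0 : u0.re ≤ 0)
    (a b c : ℝ → ℂ) (ha : Measurable a) (hb : Measurable b) (hc : Measurable c)
    (M : ℝ) (hbdd : ∀ t ∈ Icc (0:ℝ) T, ‖a t‖ ≤ M ∧ ‖b t‖ ≤ M ∧ ‖c t‖ ≤ M)
    (haim : ∀ t ∈ Icc (0:ℝ) T, (a t).im = 0)
    (hapos : ∀ t ∈ Icc (0:ℝ) T, 0 < (a t).re)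
    (hcond : ∀ t ∈ Icc (0:ℝ) T, (c t).re + (b t).im ^ 2 / (4 * (a t).re) ≤ 0)
    (tstar : ℝ) (ht1 : 0 < tstar) (ht2 : tstar ≤ T)
    (ψ : ℝ → ℂ) (hψ0 : ψ 0 = u0)
    (hode : ∀ t ∈ Icc (0:ℝ) tstar, HasDerivAt ψ (a t * ψ t ^ 2 + b t * ψ t + c t) t) :
    ∀ t ∈ Icc (0:ℝ) tstar, (ψ t).re ≤ 0 := by
  set f : ℝ → ℝ := fun t => (ψ t).re with hf_def
  set g : ℝ → ℝ := fun t => max (f t) 0 with hg_def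
  have hsub : Icc (0:ℝ) tstar ⊆ Icc (0:ℝ) T := Icc_subset_Icc le_rfl ht2
  have hM0 : 0 ≤ M := le_trans (norm_nonneg _) (hbdd 0 ⟨le_rfl, hT.le⟩).1
  have hψcont : ContinuousOn ψ (Icc (0:ℝ) tstar) := fun t ht =>
    (hode t ht).continuousAt.continuousWithinAt
  obtain ⟨B, hB⟩ := (isCompact_Icc).exists_bound_of_continuousOn hψcont
  have hB0 : 0 ≤ B := le_trans (norm_nonneg _) (hB 0 ⟨le_rfl, ht1.le⟩)
  set K : ℝ := M * B + M with hK_def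
  have hK0 : 0 ≤ K := by positivity
  have hfderiv : ∀ t ∈ Icc (0:ℝ) tstar,
      HasDerivAt f ((a t * ψ t ^ 2 + b t * ψ t + c t).re) t := fun t ht =>
    (Complex.reCLM.hasFDerivAt.comp_hasDerivAt t (hode t ht))
  have hkey : ∀ t ∈ Icc (0:ℝ) tstar, 0 ≤ f t →
      (a t * ψ t ^ 2 + b t * ψ t + c t).re ≤ K * f t := by
    intro t ht hft
    have htT := hsub ht
    have har : 0 < (a t).re := hapos t htT
    have haim' : (a t).im = 0 := haim t htT
    obtain ⟨haM, hbM, hcM⟩ := hbdd t htT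
    have hcnd := hcond t htT
    set p : ℝ := (ψ t).re with hp_def
    set q : ℝ := (ψ t).im with hq_def
    have hre : (a t * ψ t ^ 2 + b t * ψ t + c t).re
        = (a t).re * (p * p - q * q) + ((b t).re * p - (b t).im * q) + (c t).re := by
      simp [Complex.add_re, Complex.mul_re, pow_two, Complex.mul_im, haim', p, q]
    rw [hre]
    have h4 : 4 * (a t).re * (c t).re + (b t).im ^ 2 ≤ 0 := by
      have h1 : (b t).im ^ 2 / (4 * (a t).re) ≤ -(c t).re := by linarith
      rw [div_le_iff₀ (by linarith)] at h1
      linarith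
    have h1 : -(a t).re * (q * q) - (b t).im * q + (c t).re ≤ 0 := by
      nlinarith [sq_nonneg (2 * (a t).re * q + (b t).im), har]
    have harM : (a t).re ≤ M := le_trans (le_abs_self _)
      (le_trans (Complex.abs_re_le_norm _) (by exact haM))
    have hbrM : |(b t).re| ≤ M := le_trans (Complex.abs_re_le_norm _)
      (by exact hbM)
    have hpB : p ≤ B := le_trans (Complex.re_le_norm _)
      (by exact hB t ht)
    have hbr : (b t).re * p ≤ M * p :=
      mul_le_mul_of_nonneg_right (le_trans (le_abs_self _) hbrM) hft
    have hap : (a t).re * (p * p) ≤ M * B * p := by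
      nlinarith [mul_nonneg hft (sub_nonneg.2 hpB)]
    have hfp : f t = p := rfl
    rw [hfp, hK_def]
    nlinarith
  have hgcont : ContinuousOn g (Icc (0:ℝ) tstar) :=
    (Complex.continuous_re.comp_continuousOn hψcont).sup continuousOn_const
  have hg0 : g 0 ≤ 0 := by
    simp only [hg_def, hf_def, hψ0]
    exact max_le hu0 le_rfl
  have main := le_gronwallBound_of_liminf_deriv_right_le (f := g) (f' := fun t => K * g t)
    (δ := 0) (K := K) (ε := 0) hgcont ?_ hg0 (fun x _ => by simp)
  · intro t ht
    have := main t ht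
    rw [gronwallBound_ε0_δ0] at this
    exact le_trans (le_max_left _ _) this
  · intro x hx r hr
    have hxI : x ∈ Icc (0:ℝ) tstar := ⟨hx.1, hx.2.le⟩
    have hr0 : 0 < r := lt_of_le_of_lt (mul_nonneg hK0 (le_max_right _ _)) hr
    rcases lt_or_ge (f x) 0 with hneg | hpos
    · -- f x < 0 : eventually f z < 0 near x, so g is locally 0 ⇒ slope 0
      have hev : ∀ᶠ z in 𝓝 x, f z < 0 :=
        (Complex.continuous_re.continuousAt.comp (hode x hxI).continuousAt).eventually_lt
          continuousAt_const hneg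
      have hev' : ∀ᶠ z in 𝓝[>] x, (z - x)⁻¹ * (g z - g x) < r := by
        filter_upwards [nhdsWithin_le_nhds hev] with z hz
        have : g z = 0 := max_eq_right hz.le
        have hgx : g x = 0 := max_eq_right hneg.le
        simp [this, hgx, hr0]
      exact hev'.frequently
    · -- f x ≥ 0 : slope of f tends to derivative ≤ K * g x < r
      have hgx : g x = f x := max_eq_left hpos
      have hD : (a x * ψ x ^ 2 + b x * ψ x + c x).re ≤ K * g x := by
        rw [hgx]; exact hkey x hxI hpos
      have hslope : Tendsto (fun z => (z - x)⁻¹ * (f z - f x)) (𝓝[>] x)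
          (𝓝 ((a x * ψ x ^ 2 + b x * ψ x + c x).re)) := by
        have := (hasDerivAt_iff_tendsto_slope.mp (hfderiv x hxI)).mono_left
          (nhdsWithin_mono x (fun z hz => ne_of_gt hz : Ioi x ⊆ {x}ᶜ))
        refine this.congr (fun z => ?_)
        rw [slope_def_field]
        ring
      have hev : ∀ᶠ z in 𝓝[>] x, (z - x)⁻¹ * (f z - f x) < r :=
        hslope.eventually_lt_const (lt_of_le_of_lt hD hr)
      have hev' : ∀ᶠ z in 𝓝[>] x, (z - x)⁻¹ * (g z - g x) < r := by
        filter_upwards [hev, self_mem_nhdsWithin] with z hz hzx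
        have hzx' : (0:ℝ) < z - x := sub_pos.2 hzx
        have hmax : g z - g x ≤ max (f z - f x) 0 := by
          rw [hgx]
          rcases le_or_gt (f z) 0 with h | h
          · simp only [hg_def]
            rw [max_eq_right h]
            exact le_max_of_le_right (by linarith)
          · simp only [hg_def]
            rw [max_eq_left h.le]
            exact le_max_left _ _
        calc (z - x)⁻¹ * (g z - g x) ≤ (z - x)⁻¹ * max (f z - f x) 0 := by
              exact mul_le_mul_of_nonneg_left hmax (inv_nonneg.2 hzx'.le)
          _ = max ((z - x)⁻¹ * (f z - f x)) 0 := by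
              rw [mul_comm, max_mul_of_nonneg _ _ (inv_nonneg.2 hzx'.le), zero_mul,
                mul_comm]
          _ < r := max_lt hz hr0
      exact hev'.frequently
end

section
/- Fix $\epsilon>0$, $H\in\mathbb{R}$, $\xi>0$, $\rho\in[-1,1]$, $T>0$, and let $f,g:[0,T]\to\mathbb{C}$ be bounded measurable functions with $\Re f=\Re g=0$. Let $\psi_\epsilon:[0,T]\to\mathbb{C}$ be a solution of $\psi_\epsilon'(t)=\epsilon^{H-1/2}\frac{\xi^2}{2}\psi_\epsilon(t)^2+(\epsilon^{H-1/2}\rho\xi f(t)-\epsilon^{-1})\psi_\epsilon(t)+\epsilon^{H-1/2}(g(t)+\frac{f(t)^2-f(t)}{2})$ with $\psi_\epsilon(0)=0$ satisfying $\Re(\psi_\epsilon(t))\le 0$ for all $t\le T$. Then there exists a constant $C$ independent of $\epsilon$ such that $|\psi_\epsilon(t)|\le C\,\epsilon^{H+1/2}(1-e^{-t/\epsilon})$ for all $t\le T$. -/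
open MeasureTheory Set

/-- Derivative of the norm of a nonvanishing differentiable curve in `ℂ`. -/
lemma hasDerivAt_norm_complex {ψ : ℝ → ℂ} {d : ℂ} {x : ℝ} (h : HasDerivAt ψ d x)
    (hne : ψ x ≠ 0) :
    HasDerivAt (fun t => ‖ψ t‖) ((inner ℝ (ψ x) d : ℝ) / ‖ψ x‖) x := by
  have hnp : (0:ℝ) < ‖ψ x‖ := norm_pos_iff.2 hne
  have h1 : HasDerivAt (‖ψ ·‖ ^ 2) (2 * (inner ℝ (ψ x) d : ℝ)) x := h.norm_sq
  have h2 := (Real.hasDerivAt_sqrt (x := ‖ψ x‖ ^ 2) (by positivity)).comp x h1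
  have heq : (Real.sqrt ∘ (‖ψ ·‖ ^ 2)) = fun t => ‖ψ t‖ := by
    funext t
    simp [Function.comp, Real.sqrt_sq (norm_nonneg _)]
  rw [heq] at h2
  refine h2.congr_deriv ?_
  rw [Real.sqrt_sq (norm_nonneg _)]
  field_simp

/-- Arithmetic core of the differential inequality. -/
lemma riccati_ineq {E1 εi s pr pi cr ci np nc CC : ℝ}
    (hE1 : 0 ≤ E1) (hεi : 0 ≤ εi) (hs : 0 ≤ s) (hpr : pr ≤ 0)
    (hnp : 0 < np) (hnorm2 : np ^ 2 = pr ^ 2 + pi ^ 2)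
    (hcs : pr * cr + pi * ci ≤ np * nc) (hnc : nc ≤ CC) :
    E1 * s * ((pr ^ 2 + pi ^ 2) * pr) - εi * (pr ^ 2 + pi ^ 2) + E1 * (pr * cr + pi * ci)
      ≤ (-εi * np + CC * E1) * np := by
  have h1 : E1 * s * ((pr ^ 2 + pi ^ 2) * pr) ≤ 0 :=
    mul_nonpos_of_nonneg_of_nonpos (mul_nonneg hE1 hs)
      (mul_nonpos_of_nonneg_of_nonpos (by positivity) hpr)
  have h2 : E1 * (pr * cr + pi * ci) ≤ E1 * (np * nc) :=
    mul_le_mul_of_nonneg_left hcs hE1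
  have h3 : E1 * (np * nc) ≤ E1 * (np * CC) :=
    mul_le_mul_of_nonneg_left (mul_le_mul_of_nonneg_left hnc hnp.le) hE1
  have h4 : (-εi * np + CC * E1) * np = -(εi * np ^ 2) + E1 * (np * CC) := by ring
  have h5 : εi * (pr ^ 2 + pi ^ 2) = εi * np ^ 2 := by rw [hnorm2]
  linarith [h1, h2, h3, h4, h5]

/-- Uniform bound for the reversionary Riccati ODE solution, with a constant
independent of the reversionary time-scale `ε`. -/
theorem stmt3 (H ξ ρ T : ℝ) (hξ : 0 < ξ) (hρ : ρ ∈ Icc (-1:ℝ) 1) (hT : 0 < T)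
    (f g : ℝ → ℂ) (hfm : Measurable f) (hgm : Measurable g)
    (M : ℝ) (hbdd : ∀ t ∈ Icc (0:ℝ) T, ‖f t‖ ≤ M ∧ ‖g t‖ ≤ M)
    (hfre : ∀ t ∈ Icc (0:ℝ) T, (f t).re = 0)
    (hgre : ∀ t ∈ Icc (0:ℝ) T, (g t).re = 0) :
    ∃ C : ℝ, ∀ ε : ℝ, 0 < ε → ∀ ψ : ℝ → ℂ, ψ 0 = 0 →
      (∀ t ∈ Icc (0:ℝ) T, HasDerivAt ψ
        (((ε ^ (H - 1/2) : ℝ) : ℂ) * (ξ^2/2 : ℝ) * ψ t ^ 2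
          + (((ε ^ (H - 1/2) : ℝ) : ℂ) * (ρ : ℂ) * (ξ : ℂ) * f t - ((ε⁻¹ : ℝ) : ℂ)) * ψ t
          + ((ε ^ (H - 1/2) : ℝ) : ℂ) * (g t + (f t ^ 2 - f t) / 2)) t) →
      (∀ t ∈ Icc (0:ℝ) T, (ψ t).re ≤ 0) →
      ∀ t ∈ Icc (0:ℝ) T, ‖ψ t‖ ≤ C * ε ^ (H + 1/2) * (1 - Real.exp (-t / ε)) := by
  classical
  have h0T : (0:ℝ) ∈ Icc (0:ℝ) T := ⟨le_rfl, hT.le⟩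
  have hM0 : 0 ≤ M := le_trans (norm_nonneg _) (hbdd 0 h0T).1
  refine ⟨M + (M ^ 2 + M) / 2, ?_⟩
  set C : ℝ := M + (M ^ 2 + M) / 2 with hCdef
  have hC0 : 0 ≤ C := by positivity
  intro ε hε ψ hψ0 hderiv hre
  set E1 : ℝ := ε ^ (H - 1/2) with hE1def
  have hE1 : 0 < E1 := Real.rpow_pos_of_pos hε _
  -- the inhomogeneous term
  set c : ℝ → ℂ := fun t => g t + (f t ^ 2 - f t) / 2 with hcdef
  have hcC : ∀ t ∈ Icc (0:ℝ) T, ‖c t‖ ≤ C := by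
    intro t ht
    obtain ⟨hf1, hg1⟩ := hbdd t ht
    calc ‖c t‖ ≤ ‖g t‖ + ‖(f t ^ 2 - f t) / 2‖ := norm_add_le _ _
      _ ≤ M + (M ^ 2 + M) / 2 := by
          refine add_le_add hg1 ?_
          rw [norm_div]
          have h2 : ‖(2:ℂ)‖ = 2 := by norm_num
          rw [h2]
          have : ‖f t ^ 2 - f t‖ ≤ M ^ 2 + M := by
            calc ‖f t ^ 2 - f t‖ ≤ ‖f t ^ 2‖ + ‖f t‖ := norm_sub_le _ _
              _ = ‖f t‖ ^ 2 + ‖f t‖ := by rw [norm_pow]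
              _ ≤ M ^ 2 + M := by
                  refine add_le_add ?_ hf1
                  exact pow_le_pow_left₀ (norm_nonneg _) hf1 2
          linarith
  -- the full right-hand side of the ODE
  set D : ℝ → ℂ := fun t =>
    ((E1 : ℝ) : ℂ) * (ξ ^ 2 / 2 : ℝ) * ψ t ^ 2
      + (((E1 : ℝ) : ℂ) * (ρ : ℂ) * (ξ : ℂ) * f t - ((ε⁻¹ : ℝ) : ℂ)) * ψ t
      + ((E1 : ℝ) : ℂ) * c t with hDdef
  have hderiv' : ∀ t ∈ Icc (0:ℝ) T, HasDerivAt ψ (D t) t := hderiv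
  -- the one-sided derivative candidate for ‖ψ‖
  set F' : ℝ → ℝ := fun t => if ψ t = 0 then ‖D t‖ else (inner ℝ (ψ t) (D t) : ℝ) / ‖ψ t‖
    with hF'def
  have key : ∀ t ∈ Icc (0:ℝ) T,
      ‖ψ t‖ ≤ gronwallBound 0 (-ε⁻¹) (C * E1) (t - 0) := by
    apply le_gronwallBound_of_liminf_deriv_right_le (f' := F')
    · intro t ht
      exact ((hderiv' t ht).continuousAt.continuousWithinAt).norm
    · -- liminf of right slopes
      intro x hx r hr
      have hxI : x ∈ Icc (0:ℝ) T := ⟨hx.1, hx.2.le⟩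
      by_cases hzero : ψ x = 0
      · have hr' : ‖D x‖ < r := by simpa [hF'def, hzero] using hr
        exact (hderiv' x hxI).hasDerivWithinAt.liminf_right_slope_norm_le hr'
      · have hd := hasDerivAt_norm_complex (hderiv' x hxI) hzero
        have hr' : (inner ℝ (ψ x) (D x) : ℝ) / ‖ψ x‖ < r := by
          simpa [hF'def, hzero] using hr
        have := hd.hasDerivWithinAt.liminf_right_slope_le hr'
        refine this.mono fun z hz => ?_
        rwa [slope_def_field, div_eq_inv_mul] at hz
    · simp [hψ0]
    · -- the differential inequality
      intro x hx
      have hxI : x ∈ Icc (0:ℝ) T := ⟨hx.1, hx.2.le⟩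
      by_cases hzero : ψ x = 0
      · have hD0 : D x = ((E1 : ℝ) : ℂ) * c x := by
          simp [hDdef, hzero]
        have : ‖D x‖ ≤ E1 * C := by
          rw [hD0, norm_mul, Complex.norm_real, Real.norm_eq_abs, abs_of_pos hE1]
          exact mul_le_mul_of_nonneg_left (hcC x hxI) hE1.le
        simp only [hF'def, if_pos hzero, hzero, norm_zero]
        calc ‖D x‖ ≤ E1 * C := this
          _ = -ε⁻¹ * 0 + C * E1 := by ring
      · simp only [hF'def, if_neg hzero]
        have hnp : (0:ℝ) < ‖ψ x‖ := norm_pos_iff.2 hzero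
        rw [div_le_iff₀ hnp]
        set pr : ℝ := (ψ x).re with hpr
        set pi : ℝ := (ψ x).im with hpi
        set cr : ℝ := (c x).re with hcr
        set ci : ℝ := (c x).im with hci
        have hFre : (f x).re = 0 := hfre x hxI
        -- expand the inner product
        have hid : (inner ℝ (ψ x) (D x) : ℝ)
            = E1 * (ξ ^ 2 / 2) * ((pr ^ 2 + pi ^ 2) * pr)
              - ε⁻¹ * (pr ^ 2 + pi ^ 2) + E1 * (pr * cr + pi * ci) := by
          rw [Complex.inner]
          simp only [hDdef, hpr, hpi, hcr, hci, pow_two, Complex.mul_re, Complex.mul_im,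
            Complex.add_re, Complex.add_im, Complex.sub_re, Complex.sub_im,
            Complex.conj_re, Complex.conj_im, Complex.ofReal_re, Complex.ofReal_im, hFre]
          ring
        have hcs : pr * cr + pi * ci ≤ ‖ψ x‖ * ‖c x‖ := by
          have := real_inner_le_norm (ψ x) (c x)
          rw [Complex.inner, Complex.mul_re, Complex.conj_re, Complex.conj_im,
            ← hpr, ← hpi, ← hcr, ← hci, mul_neg, sub_neg_eq_add] at this
          linarith
        have hnorm2 : ‖ψ x‖ ^ 2 = pr ^ 2 + pi ^ 2 := by
          rw [hpr, hpi, Complex.sq_norm, Complex.normSq_apply]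
          ring
        have hprle : pr ≤ 0 := hre x hxI
        have hcxC : ‖c x‖ ≤ C := hcC x hxI
        rw [hid]
        exact riccati_ineq hE1.le (inv_pos.2 hε).le (by positivity) hprle hnp hnorm2
          (hcs.trans le_rfl) hcxC
  -- convert the Gronwall bound to the desired form
  intro t ht
  have := key t ht
  have hbound : gronwallBound 0 (-ε⁻¹) (C * E1) (t - 0)
      = C * ε ^ (H + 1/2) * (1 - Real.exp (-t / ε)) := by
    have hKne : (-ε⁻¹ : ℝ) ≠ 0 := by
      simp [ne_of_gt (inv_pos.2 hε)]
    rw [gronwallBound_of_K_ne_0 hKne]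
    simp only [sub_zero]
    have hexp : -ε⁻¹ * t = -t / ε := by
      field_simp
    rw [hexp]
    have hre : ε ^ (H + 1/2) = E1 * ε := by
      have h12 : H + 1/2 = (H - 1/2) + 1 := by ring
      rw [h12, Real.rpow_add hε, Real.rpow_one, hE1def]
    rw [hre]
    have hdivK : C * E1 / (-ε⁻¹) = -(C * E1 * ε) := by
      field_simp
    rw [hdivK]
    ring
  rw [hbound] at this
  exact this
end

section
/- Fix $H>-1/2$, $\xi>0$, $\rho\in[-1,1]$, $T>0$, and bounded measurable $f,g:[0,T]\to\mathbb{C}$ with $\Re f=\Re g=0$. For $\epsilon>0$ let $\psi_\epsilon$ solve the reversionary Riccati ODE as above with $\Re\psi_\epsilon\le 0$. Then $\int_0^t \epsilon^{-H-1/2}\psi_\epsilon(u)du \to \int_0^t (g(s)+\frac{f^2(s)-f(s)}{2})ds$ as $\epsilon\to 0$, for every $t\le T$. -/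
open MeasureTheory Set Filter

section helpers
lemma aux_ineq (ε A K a b cre cim : ℝ) (hε : 0 < ε) (hA : 0 ≤ A) (ha : a ≤ 0)
    (hc : cre^2 + cim^2 ≤ K^2) :
    2*(A*(a^2+b^2)*a - ε⁻¹*(a^2+b^2) + (a*cre + b*cim)) ≤ -(ε⁻¹*(a^2+b^2)) + ε*K^2 := by
  have key : 2*ε*(A*(a^2+b^2)*a) + 2*ε*(a*cre+b*cim) ≤ (a^2+b^2) + ε^2*K^2 := by
    nlinarith [sq_nonneg (a - ε*cre), sq_nonneg (b - ε*cim),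
      mul_nonneg (mul_nonneg hε.le (mul_nonneg hA (add_nonneg (sq_nonneg a) (sq_nonneg b))))
        (neg_nonneg.2 ha),
      mul_le_mul_of_nonneg_left hc (sq_nonneg ε)]
  have h3 := mul_le_mul_of_nonneg_left key (inv_nonneg.2 hε.le)
  have h4 : ε⁻¹ * ε = 1 := inv_mul_cancel₀ hε.ne'
  have h2 : 2*(A*(a^2+b^2)*a) + 2*(a*cre+b*cim) ≤ ε⁻¹*(a^2+b^2) + ε*K^2 :=
    calc 2*(A*(a^2+b^2)*a) + 2*(a*cre+b*cim)
        = ε⁻¹ * (2*ε*(A*(a^2+b^2)*a) + 2*ε*(a*cre+b*cim)) := by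
          field_simp
      _ ≤ ε⁻¹ * ((a^2+b^2) + ε^2*K^2) := h3
      _ = ε⁻¹*(a^2+b^2) + ε⁻¹*ε*ε*K^2 := by ring
      _ = ε⁻¹*(a^2+b^2) + ε*K^2 := by rw [h4]; ring
  linarith

lemma complex_step (ε A r K : ℝ) (hε : 0 < ε) (hA : 0 ≤ A) (z F c : ℂ)
    (hz : z.re ≤ 0) (hF : F.re = 0) (hc : ‖c‖ ≤ K) :
    2*(z.re * ((A:ℂ)*z^2 + ((r:ℂ)*F - ((ε⁻¹:ℝ):ℂ))*z + c).re
       + z.im * ((A:ℂ)*z^2 + ((r:ℂ)*F - ((ε⁻¹:ℝ):ℂ))*z + c).im)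
      ≤ -(ε⁻¹*(z.re^2+z.im^2)) + ε*K^2 := by
  have hK : 0 ≤ K := le_trans (norm_nonneg c) hc
  have hc2 : c.re^2 + c.im^2 ≤ K^2 := by
    have h1 : c.re^2 + c.im^2 = ‖c‖^2 := by
      rw [Complex.sq_norm, Complex.normSq_apply]; ring
    rw [h1]
    exact pow_le_pow_left₀ (norm_nonneg c) hc 2
  have := aux_ineq ε A K z.re z.im c.re c.im hε hA hz hc2
  have hexp : z.re * ((A:ℂ)*z^2 + ((r:ℂ)*F - ((ε⁻¹:ℝ):ℂ))*z + c).re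
       + z.im * ((A:ℂ)*z^2 + ((r:ℂ)*F - ((ε⁻¹:ℝ):ℂ))*z + c).im
      = A*(z.re^2+z.im^2)*z.re - ε⁻¹*(z.re^2+z.im^2) + (z.re*c.re + z.im*c.im) := by
    simp only [Complex.add_re, Complex.add_im, Complex.mul_re, Complex.mul_im,
      Complex.sub_re, Complex.sub_im, Complex.ofReal_re, Complex.ofReal_im,
      pow_two, hF]
    ring
  rw [hexp] at *
  linarith

lemma comp_le (T ε B : ℝ) (hε : 0 < ε) (hB : 0 ≤ B)
    (h h' : ℝ → ℝ) (h0 : h 0 = 0)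
    (hd : ∀ s ∈ Icc (0:ℝ) T, HasDerivAt h (h' s) s)
    (hle : ∀ s ∈ Icc (0:ℝ) T, h' s ≤ -(ε⁻¹ * h s) + B) :
    ∀ s ∈ Icc (0:ℝ) T, h s ≤ ε * B := by
  set φ : ℝ → ℝ := fun s => (h s - ε*B) * Real.exp (ε⁻¹ * s) with hφ
  have hφd : ∀ s ∈ Icc (0:ℝ) T,
      HasDerivAt φ ((h' s + ε⁻¹*(h s - ε*B)) * Real.exp (ε⁻¹*s)) s := by
    intro s hs
    have h1 := (hd s hs).sub_const (ε*B)
    have h2 : HasDerivAt (fun s : ℝ => Real.exp (ε⁻¹*s)) (ε⁻¹ * Real.exp (ε⁻¹*s)) s := by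
      have h2' := ((hasDerivAt_id s).const_mul ε⁻¹).exp
      simpa [mul_comm] using h2'
    have := h1.mul h2
    exact this.congr_deriv (by ring)
  have anti : AntitoneOn φ (Icc 0 T) := by
    apply antitoneOn_of_deriv_nonpos (convex_Icc 0 T)
    · exact fun s hs => ((hφd s hs).continuousAt.continuousWithinAt)
    · intro s hs
      rw [interior_Icc] at hs
      exact ((hφd s (Ioo_subset_Icc_self hs)).differentiableAt.differentiableWithinAt)
    · intro s hs
      rw [interior_Icc] at hs
      have hs' := Ioo_subset_Icc_self hs
      rw [(hφd s hs').deriv]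
      have h3 := hle s hs'
      have h4 : h' s + ε⁻¹*(h s - ε*B) ≤ 0 := by
        have : ε⁻¹ * (ε * B) = B := by field_simp
        nlinarith [this]
      exact mul_nonpos_iff.2 (Or.inr ⟨h4, (Real.exp_pos _).le⟩)
  intro s hs
  have h0T : (0:ℝ) ∈ Icc (0:ℝ) T := left_mem_Icc.2 (hs.1.trans hs.2)
  have h5 := anti h0T hs hs.1
  have h6 : φ 0 = -(ε*B) := by simp [hφ, h0]
  have h7 : φ s ≤ 0 := by
    rw [h6] at h5
    nlinarith [mul_nonneg hε.le hB]
  have h8 : (h s - ε*B) * Real.exp (ε⁻¹ * s) ≤ 0 * Real.exp (ε⁻¹ * s) := by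
    simpa using h7
  have := le_of_mul_le_mul_right h8 (Real.exp_pos _)
  linarith

lemma II_of_bound (t : ℝ) (ht : 0 ≤ t) (φ : ℝ → ℂ)
    (hm : AEStronglyMeasurable φ (volume.restrict (Ioc 0 t))) (Cb : ℝ)
    (hb : ∀ s ∈ Ioc (0:ℝ) t, ‖φ s‖ ≤ Cb) : IntervalIntegrable φ volume 0 t := by
  rw [intervalIntegrable_iff, uIoc_of_le ht]
  have hconst : Integrable (fun _ : ℝ => Cb) (volume.restrict (Ioc 0 t)) :=
    integrableOn_const measure_Ioc_lt_top.ne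
  exact Integrable.mono' hconst hm
    (by filter_upwards [ae_restrict_mem measurableSet_Ioc] with x hx using hb x hx)
end helpers

/-- For `H > -1/2`, `∫_0^t ε^(-H-1/2) ψ_ε → ∫_0^t (g + (f²-f)/2)` as `ε → 0⁺`. -/
theorem stmt5 (H ξ ρ T : ℝ) (hH : -(1:ℝ)/2 < H) (hξ : 0 < ξ)
    (hρ : ρ ∈ Icc (-1:ℝ) 1) (hT : 0 < T)
    (f g : ℝ → ℂ) (hfm : Measurable f) (hgm : Measurable g)
    (M : ℝ) (hbdd : ∀ t ∈ Icc (0:ℝ) T, ‖f t‖ ≤ M ∧ ‖g t‖ ≤ M)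
    (hfre : ∀ t ∈ Icc (0:ℝ) T, (f t).re = 0)
    (hgre : ∀ t ∈ Icc (0:ℝ) T, (g t).re = 0)
    (ψ : ℝ → ℝ → ℂ)
    (hψ0 : ∀ ε : ℝ, 0 < ε → ψ ε 0 = 0)
    (hode : ∀ ε : ℝ, 0 < ε → ∀ t ∈ Icc (0:ℝ) T, HasDerivAt (ψ ε)
      (((ε ^ (H - 1/2) : ℝ) : ℂ) * (ξ^2/2 : ℝ) * ψ ε t ^ 2
        + (((ε ^ (H - 1/2) : ℝ) : ℂ) * (ρ : ℂ) * (ξ : ℂ) * f t - ((ε⁻¹ : ℝ) : ℂ)) * ψ ε t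
        + ((ε ^ (H - 1/2) : ℝ) : ℂ) * (g t + (f t ^ 2 - f t) / 2)) t)
    (hneg : ∀ ε : ℝ, 0 < ε → ∀ t ∈ Icc (0:ℝ) T, (ψ ε t).re ≤ 0) :
    ∀ t ∈ Icc (0:ℝ) T,
      Tendsto (fun ε : ℝ => ∫ u in (0:ℝ)..t, ((ε ^ (-H - 1/2) : ℝ) : ℂ) * ψ ε u)
        (nhdsWithin 0 (Set.Ioi 0))
        (nhds (∫ s in (0:ℝ)..t, (g s + (f s ^ 2 - f s) / 2))) := by
  intro t ht
  obtain ⟨ht0, htT⟩ := ht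
  have h0T : (0:ℝ) ∈ Icc (0:ℝ) T := ⟨le_refl 0, hT.le⟩
  have hM0 : 0 ≤ M := le_trans (norm_nonneg (f 0)) (hbdd 0 h0T).1
  set C₀ : ℝ := M + (M^2 + M)/2 with hC₀def
  have hC₀ : 0 ≤ C₀ := by positivity
  -- bound on the inhomogeneity
  have hGbd : ∀ s ∈ Icc (0:ℝ) T, ‖g s + (f s^2 - f s)/2‖ ≤ C₀ := by
    intro s hs
    obtain ⟨hf1, hg1⟩ := hbdd s hs
    have h1 : ‖(f s^2 - f s)/2‖ = ‖f s^2 - f s‖/2 := by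
      rw [norm_div]; norm_num
    have h2 : ‖f s^2 - f s‖ ≤ ‖f s‖^2 + ‖f s‖ :=
      le_trans (norm_sub_le _ _) (by rw [norm_pow])
    have h3 : ‖f s‖^2 ≤ M^2 := by nlinarith [norm_nonneg (f s)]
    calc ‖g s + (f s^2 - f s)/2‖ ≤ ‖g s‖ + ‖(f s^2 - f s)/2‖ := norm_add_le _ _
      _ ≤ M + (‖f s‖^2 + ‖f s‖)/2 := by rw [h1]; linarith
      _ ≤ C₀ := by rw [hC₀def]; linarith
  -- uniform bound on ψ
  have hψbd : ∀ ε : ℝ, 0 < ε → ∀ s ∈ Icc (0:ℝ) T,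
      ‖ψ ε s‖ ≤ C₀ * (ε * ε ^ (H - 1/2)) := by
    intro ε hε
    have hu0 : 0 < ε ^ (H - 1/2) := Real.rpow_pos_of_pos hε _
    set u := ε ^ (H - 1/2) with hu
    set K := u * C₀ with hK
    set D : ℝ → ℂ := fun s =>
      ((u : ℝ) : ℂ) * (ξ^2/2 : ℝ) * ψ ε s ^ 2
        + (((u : ℝ) : ℂ) * (ρ : ℂ) * (ξ : ℂ) * f s - ((ε⁻¹ : ℝ) : ℂ)) * ψ ε s
        + ((u : ℝ) : ℂ) * (g s + (f s ^ 2 - f s) / 2) with hD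
    have hDd : ∀ s ∈ Icc (0:ℝ) T, HasDerivAt (ψ ε) (D s) s := by
      intro s hs
      have h0 := hode ε hε s hs
      rw [hD]
      exact h0
    set h : ℝ → ℝ := fun s => (ψ ε s).re^2 + (ψ ε s).im^2 with hh
    set h' : ℝ → ℝ := fun s =>
      2*((ψ ε s).re * (D s).re + (ψ ε s).im * (D s).im) with hh'
    have hhd : ∀ s ∈ Icc (0:ℝ) T, HasDerivAt h (h' s) s := by
      intro s hs
      have h1 : HasDerivAt (fun s => (ψ ε s).re) ((D s).re) s := by
        have := Complex.reCLM.hasFDerivAt.comp_hasDerivAt s (hDd s hs)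
        simpa only [Complex.reCLM_apply, Function.comp_def] using this
      have h2 : HasDerivAt (fun s => (ψ ε s).im) ((D s).im) s := by
        have := Complex.imCLM.hasFDerivAt.comp_hasDerivAt s (hDd s hs)
        simpa only [Complex.imCLM_apply, Function.comp_def] using this
      have h3 := (h1.pow 2).add (h2.pow 2)
      exact h3.congr_deriv (by norm_num; ring)
    have hle : ∀ s ∈ Icc (0:ℝ) T, h' s ≤ -(ε⁻¹ * h s) + ε*K^2 := by
      intro s hs
      have hcK : ‖((u:ℝ):ℂ) * (g s + (f s ^ 2 - f s) / 2)‖ ≤ K := by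
        rw [norm_mul, Complex.norm_real, Real.norm_eq_abs, abs_of_pos hu0, hK]
        exact mul_le_mul_of_nonneg_left (hGbd s hs) hu0.le
      have hstep := complex_step ε (u*(ξ^2/2)) (u*ρ*ξ) K hε (by positivity)
        (ψ ε s) (f s) (((u:ℝ):ℂ) * (g s + (f s ^ 2 - f s) / 2))
        (hneg ε hε s hs) (hfre s hs) hcK
      have heq : D s = (((u*(ξ^2/2):ℝ):ℂ)*(ψ ε s)^2
            + (((u*ρ*ξ:ℝ):ℂ)*(f s) - ((ε⁻¹:ℝ):ℂ))*(ψ ε s)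
            + ((u:ℝ):ℂ) * (g s + (f s ^ 2 - f s) / 2)) := by
        rw [hD]
        push_cast
        ring
      simp only [hh', hh, heq]
      exact hstep
    have hB : 0 ≤ ε*K^2 := by positivity
    have hcomp := comp_le T ε (ε*K^2) hε hB h h'
      (by simp [hh, hψ0 ε hε]) hhd hle
    intro s hs
    have h9 : ‖ψ ε s‖^2 = h s := by
      rw [Complex.sq_norm, Complex.normSq_apply, hh]; ring
    have h10 := hcomp s hs
    have h11 : ε * (ε*K^2) = (C₀ * (ε * u))^2 := by rw [hK]; ring
    have h12 : ‖ψ ε s‖^2 ≤ (C₀ * (ε * u))^2 := by rw [h9]; rw [h11] at h10; exact h10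
    have h13 : 0 ≤ C₀ * (ε * u) := by positivity
    nlinarith [norm_nonneg (ψ ε s)]
  -- limit of the bound function
  have hH2 : 0 < H + 1/2 := by linarith
  have hw : Tendsto (fun ε : ℝ => ε ^ (H+1/2)) (nhdsWithin 0 (Ioi 0)) (nhds 0) := by
    have hc := (Real.continuousAt_rpow_const 0 (H+1/2) (Or.inr hH2.le)).tendsto
    rw [Real.zero_rpow hH2.ne'] at hc
    exact hc.mono_left nhdsWithin_le_nhds
  have hid : Tendsto (fun ε : ℝ => ε) (nhdsWithin 0 (Ioi 0)) (nhds 0) :=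
    tendsto_id.mono_left nhdsWithin_le_nhds
  rw [← tendsto_sub_nhds_zero_iff]
  apply squeeze_zero_norm'
    (a := fun ε : ℝ => ξ^2/2*(C₀*ε^(H+1/2))^2*T + ξ*(M*(C₀*ε^(H+1/2)))*T + C₀*ε)
  · -- eventual bound : the main computation
    filter_upwards [self_mem_nhdsWithin] with ε (hε : ε ∈ Ioi (0:ℝ))
    rw [mem_Ioi] at hε
    have hu0 : 0 < ε ^ (H - 1/2) := Real.rpow_pos_of_pos hε _
    have hv0 : 0 < ε ^ (-H - 1/2) := Real.rpow_pos_of_pos hε _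
    have hIoc : Ioc (0:ℝ) t ⊆ Icc (0:ℝ) T := fun s hs => ⟨hs.1.le, hs.2.trans htT⟩
    have hψb := hψbd ε hε
    -- measurability and integrability
    have hcont : ContinuousOn (ψ ε) (Icc 0 T) := fun s hs =>
      (hode ε hε s hs).continuousAt.continuousWithinAt
    have hψae : AEStronglyMeasurable (ψ ε) (volume.restrict (Ioc 0 t)) :=
      ((hcont.mono (Icc_subset_Icc le_rfl htT)).aestronglyMeasurable
        measurableSet_Icc).mono_measure
        (Measure.restrict_mono Ioc_subset_Icc_self le_rfl)
    have hI0 : IntervalIntegrable (ψ ε) volume 0 t :=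
      II_of_bound t ht0 _ hψae (C₀*(ε*ε ^ (H - 1/2))) (fun s hs => hψb s (hIoc hs))
    have hI1 : IntervalIntegrable (fun s => ψ ε s^2) volume 0 t := by
      apply II_of_bound t ht0 _ (by simpa only [pow_two, Pi.mul_def] using hψae.mul hψae)
        ((C₀*(ε*ε ^ (H - 1/2)))^2)
      intro s hs
      rw [norm_pow]
      exact pow_le_pow_left₀ (norm_nonneg _) (hψb s (hIoc hs)) 2
    have hI2 : IntervalIntegrable (fun s => f s * ψ ε s) volume 0 t := by
      apply II_of_bound t ht0 _ (hfm.aestronglyMeasurable.mul hψae)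
        (M*(C₀*(ε*ε ^ (H - 1/2))))
      intro s hs
      simp only [Pi.mul_apply]
      rw [norm_mul]
      exact mul_le_mul (hbdd s (hIoc hs)).1 (hψb s (hIoc hs)) (norm_nonneg _) hM0
    have hGm : Measurable (fun s => g s + (f s^2 - f s)/2) :=
      hgm.add (((hfm.pow_const 2).sub hfm).div_const 2)
    have hIG : IntervalIntegrable (fun s => g s + (f s^2 - f s)/2) volume 0 t :=
      II_of_bound t ht0 _ hGm.aestronglyMeasurable C₀ (fun s hs => hGbd s (hIoc hs))
    -- FTC
    have hFTC : (∫ s in (0:ℝ)..t,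
          ((((ε ^ (H - 1/2):ℝ):ℂ) * ((ξ^2/2:ℝ):ℂ))*(ψ ε s^2)
          + (((((ε ^ (H - 1/2):ℝ)):ℂ)*(ρ:ℂ)*(ξ:ℂ))*(f s * ψ ε s)
          + ((-(((ε⁻¹:ℝ)):ℂ))*(ψ ε s)
            + ((ε ^ (H - 1/2):ℝ):ℂ)*(g s + (f s^2 - f s)/2)))))
        = ψ ε t := by
      rw [intervalIntegral.integral_eq_sub_of_hasDerivAt (f := ψ ε) ?_ ?_, hψ0 ε hε, sub_zero]
      · intro s hs
        rw [uIcc_of_le ht0] at hs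
        have hs' : s ∈ Icc (0:ℝ) T := ⟨hs.1, hs.2.trans htT⟩
        have h0 := hode ε hε s hs'
        exact h0.congr_deriv (by push_cast; ring)
      · exact (hI1.const_mul _).add ((hI2.const_mul _).add
          ((hI0.const_mul _).add (hIG.const_mul _)))
    have hsum : ((((ε ^ (H - 1/2):ℝ):ℂ) * ((ξ^2/2:ℝ):ℂ))*(∫ s in (0:ℝ)..t, ψ ε s^2)
          + (((((ε ^ (H - 1/2):ℝ)):ℂ)*(ρ:ℂ)*(ξ:ℂ))*(∫ s in (0:ℝ)..t, f s * ψ ε s)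
          + ((-(((ε⁻¹:ℝ)):ℂ))*(∫ s in (0:ℝ)..t, ψ ε s)
            + ((ε ^ (H - 1/2):ℝ):ℂ)*(∫ s in (0:ℝ)..t, (g s + (f s^2 - f s)/2)))))
        = ψ ε t := by
      rw [← hFTC,
        intervalIntegral.integral_add (hI1.const_mul _) ((hI2.const_mul _).add
          ((hI0.const_mul _).add (hIG.const_mul _))),
        intervalIntegral.integral_add (hI2.const_mul _)
          ((hI0.const_mul _).add (hIG.const_mul _)),
        intervalIntegral.integral_add (hI0.const_mul _) (hIG.const_mul _),
        intervalIntegral.integral_const_mul, intervalIntegral.integral_const_mul,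
        intervalIntegral.integral_const_mul, intervalIntegral.integral_const_mul]
    -- power identities
    have hvu : ε ^ (-H - 1/2) * ε * ε ^ (H - 1/2) = 1 := by
      have h1 : ε ^ (-H - 1/2) * ε ^ (H - 1/2) = ε⁻¹ := by
        rw [← Real.rpow_add hε, show -H - 1/2 + (H - 1/2) = (-1:ℝ) by ring,
          Real.rpow_neg_one]
      calc ε ^ (-H - 1/2) * ε * ε ^ (H - 1/2)
          = (ε ^ (-H - 1/2) * ε ^ (H - 1/2)) * ε := by ring
        _ = ε⁻¹ * ε := by rw [h1]
        _ = 1 := inv_mul_cancel₀ hε.ne'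
    have hvuC : ((ε ^ (-H - 1/2):ℝ):ℂ) * ((ε:ℝ):ℂ) * ((ε ^ (H - 1/2):ℝ):ℂ) = 1 := by
      exact_mod_cast congrArg (fun x : ℝ => (x:ℂ)) hvu
    have hεC : ((ε:ℝ):ℂ) * ((ε⁻¹:ℝ):ℂ) = 1 := by
      have h2 : ε * ε⁻¹ = 1 := mul_inv_cancel₀ hε.ne'
      exact_mod_cast congrArg (fun x : ℝ => (x:ℂ)) h2
    have hεu : ε * ε ^ (H - 1/2) = ε ^ (H + 1/2) := by
      rw [show H + 1/2 = 1 + (H - 1/2) by ring, Real.rpow_add hε, Real.rpow_one]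
    -- main identity
    have hdiff : ((ε ^ (-H - 1/2):ℝ):ℂ) * (∫ s in (0:ℝ)..t, ψ ε s)
          - (∫ s in (0:ℝ)..t, (g s + (f s^2 - f s)/2))
        = ((ξ^2/2:ℝ):ℂ)*(∫ s in (0:ℝ)..t, ψ ε s^2)
          + ((ρ:ℂ)*(ξ:ℂ))*(∫ s in (0:ℝ)..t, f s * ψ ε s)
          - (((ε ^ (-H - 1/2):ℝ):ℂ)*((ε:ℝ):ℂ))*(ψ ε t) := by
      linear_combination (-(((ε ^ (-H - 1/2):ℝ):ℂ)*((ε:ℝ):ℂ)))*hsum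
        + (((ξ^2/2:ℝ):ℂ)*(∫ s in (0:ℝ)..t, ψ ε s^2)
            + ((ρ:ℂ)*(ξ:ℂ))*(∫ s in (0:ℝ)..t, f s * ψ ε s)
            + (∫ s in (0:ℝ)..t, (g s + (f s^2 - f s)/2)))*hvuC
        + (-(((ε ^ (-H - 1/2):ℝ):ℂ)*(∫ s in (0:ℝ)..t, ψ ε s)))*hεC
    -- norm bounds
    have hQn : ‖(∫ s in (0:ℝ)..t, ψ ε s^2)‖ ≤ (C₀*(ε*ε ^ (H - 1/2)))^2 * t := by
      have := intervalIntegral.norm_integral_le_of_norm_le_const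
        (C := (C₀*(ε*ε ^ (H - 1/2)))^2) (f := fun s => ψ ε s^2) (a := (0:ℝ)) (b := t) ?_
      · rwa [sub_zero, abs_of_nonneg ht0] at this
      · intro x hx
        rw [uIoc_of_le ht0] at hx
        rw [norm_pow]
        exact pow_le_pow_left₀ (norm_nonneg _) (hψb x (hIoc hx)) 2
    have hRn : ‖(∫ s in (0:ℝ)..t, f s * ψ ε s)‖ ≤ M*(C₀*(ε*ε ^ (H - 1/2))) * t := by
      have := intervalIntegral.norm_integral_le_of_norm_le_const
        (C := M*(C₀*(ε*ε ^ (H - 1/2)))) (f := fun s => f s * ψ ε s) (a := (0:ℝ)) (b := t) ?_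
      · rwa [sub_zero, abs_of_nonneg ht0] at this
      · intro x hx
        rw [uIoc_of_le ht0] at hx
        rw [norm_mul]
        exact mul_le_mul (hbdd x (hIoc hx)).1 (hψb x (hIoc hx)) (norm_nonneg _) hM0
    have hzn : ‖ψ ε t‖ ≤ C₀*(ε*ε ^ (H - 1/2)) := hψb t ⟨ht0, htT⟩
    -- assemble
    have n1 : ‖((ξ^2/2:ℝ):ℂ)*(∫ s in (0:ℝ)..t, ψ ε s^2)‖
        ≤ ξ^2/2*(C₀*ε^(H + 1/2))^2*t := by
      rw [norm_mul, Complex.norm_real, Real.norm_eq_abs,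
        abs_of_nonneg (by positivity : (0:ℝ) ≤ ξ^2/2)]
      calc ξ^2/2 * ‖(∫ s in (0:ℝ)..t, ψ ε s^2)‖
          ≤ ξ^2/2 * ((C₀*(ε*ε ^ (H - 1/2)))^2 * t) :=
            mul_le_mul_of_nonneg_left hQn (by positivity)
        _ = ξ^2/2*(C₀*ε^(H + 1/2))^2*t := by rw [← hεu]; ring
    have n2 : ‖((ρ:ℂ)*(ξ:ℂ))*(∫ s in (0:ℝ)..t, f s * ψ ε s)‖
        ≤ ξ*(M*(C₀*ε^(H + 1/2)))*t := by
      have hρ1 : |ρ| ≤ 1 := abs_le.mpr ⟨hρ.1, hρ.2⟩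
      rw [norm_mul, norm_mul, Complex.norm_real, Complex.norm_real,
        Real.norm_eq_abs, Real.norm_eq_abs, abs_of_pos hξ]
      calc |ρ| * ξ * ‖(∫ s in (0:ℝ)..t, f s * ψ ε s)‖
          ≤ 1 * ξ * (M*(C₀*(ε*ε ^ (H - 1/2))) * t) := by
            apply mul_le_mul (by nlinarith) hRn (norm_nonneg _) (by positivity)
        _ = ξ*(M*(C₀*ε^(H + 1/2)))*t := by rw [← hεu]; ring
    have n3 : ‖(((ε ^ (-H - 1/2):ℝ):ℂ)*((ε:ℝ):ℂ))*(ψ ε t)‖ ≤ C₀*ε := by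
      rw [norm_mul, norm_mul, Complex.norm_real, Complex.norm_real,
        Real.norm_eq_abs, Real.norm_eq_abs, abs_of_pos hv0, abs_of_pos hε]
      calc ε ^ (-H - 1/2) * ε * ‖ψ ε t‖
          ≤ ε ^ (-H - 1/2) * ε * (C₀*(ε*ε ^ (H - 1/2))) :=
            mul_le_mul_of_nonneg_left hzn (by positivity)
        _ = (ε ^ (-H - 1/2) * ε * ε ^ (H - 1/2)) * (C₀*ε) := by ring
        _ = C₀*ε := by rw [hvu]; ring
    have m1 : ξ^2/2*(C₀*ε^(H + 1/2))^2*t ≤ ξ^2/2*(C₀*ε^(H + 1/2))^2*T :=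
      mul_le_mul_of_nonneg_left htT (by positivity)
    have m2 : ξ*(M*(C₀*ε^(H + 1/2)))*t ≤ ξ*(M*(C₀*ε^(H + 1/2)))*T := by
      apply mul_le_mul_of_nonneg_left htT
      have : (0:ℝ) ≤ ε^(H + 1/2) := Real.rpow_nonneg hε.le _
      positivity
    rw [intervalIntegral.integral_const_mul, hdiff]
    calc ‖((ξ^2/2:ℝ):ℂ)*(∫ s in (0:ℝ)..t, ψ ε s^2)
          + ((ρ:ℂ)*(ξ:ℂ))*(∫ s in (0:ℝ)..t, f s * ψ ε s)
          - (((ε ^ (-H - 1/2):ℝ):ℂ)*((ε:ℝ):ℂ))*(ψ ε t)‖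
        ≤ ‖((ξ^2/2:ℝ):ℂ)*(∫ s in (0:ℝ)..t, ψ ε s^2)
          + ((ρ:ℂ)*(ξ:ℂ))*(∫ s in (0:ℝ)..t, f s * ψ ε s)‖
          + ‖(((ε ^ (-H - 1/2):ℝ):ℂ)*((ε:ℝ):ℂ))*(ψ ε t)‖ := norm_sub_le _ _
      _ ≤ (‖((ξ^2/2:ℝ):ℂ)*(∫ s in (0:ℝ)..t, ψ ε s^2)‖
          + ‖((ρ:ℂ)*(ξ:ℂ))*(∫ s in (0:ℝ)..t, f s * ψ ε s)‖)
          + ‖(((ε ^ (-H - 1/2):ℝ):ℂ)*((ε:ℝ):ℂ))*(ψ ε t)‖ := by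
            gcongr
            exact norm_add_le _ _
      _ ≤ ξ^2/2*(C₀*ε^(H + 1/2))^2*T + ξ*(M*(C₀*ε^(H + 1/2)))*T + C₀*ε := by
            linarith [n1, n2, n3, m1, m2]
  · have l1 := (((hw.const_mul C₀).pow 2).const_mul (ξ^2/2)).mul_const T
    have l2 := (((hw.const_mul C₀).const_mul M).const_mul ξ).mul_const T
    have l3 := hid.const_mul C₀
    have l := (l1.add l2).add l3
    convert l using 2
    norm_num
end

section
/- Let $\xi>0$, $\rho\in(-1,1)$, $t\in[0,T]$, and $f,g:[0,T]\to\mathbb{C}$ bounded measurable with $\Re f=\Re g=0$. If $(f(t),g(t))\neq(0,0)$, then the quadratic polynomial $P(X)=\frac{\xi^2}{2}X^2-(1-\rho\xi f(t))X+g(t)+\frac{f^2(t)-f(t)}{2}$ has exactly two complex roots, one with strictly negative real part and one with strictly positive real part. If $(f(t),g(t))=(0,0)$, then $P$ has roots $0$ and $2/\xi^2$. -/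
open Set

set_option maxHeartbeats 1000000 in
/-- Root structure of the polynomial `P` from the Riccati analysis. -/
theorem stmt6 (ξ ρ T t : ℝ) (hξ : 0 < ξ) (hρ : ρ ∈ Ioo (-1:ℝ) 1) (hT : 0 < T)
    (ht : t ∈ Icc (0:ℝ) T)
    (f g : ℝ → ℂ) (hfm : Measurable f) (hgm : Measurable g)
    (M : ℝ) (hbdd : ∀ s ∈ Icc (0:ℝ) T, ‖f s‖ ≤ M ∧ ‖g s‖ ≤ M)
    (hfre : ∀ s ∈ Icc (0:ℝ) T, (f s).re = 0)
    (hgre : ∀ s ∈ Icc (0:ℝ) T, (g s).re = 0) :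
    ((f t, g t) ≠ ((0:ℂ), (0:ℂ)) →
      ∃ r1 r2 : ℂ, r1 ≠ r2 ∧ r1.re < 0 ∧ 0 < r2.re ∧
        ∀ X : ℂ, ((ξ^2/2 : ℝ) : ℂ) * X^2 - (1 - (ρ:ℂ)*(ξ:ℂ)*f t) * X
            + g t + (f t ^ 2 - f t)/2 = 0 ↔ (X = r1 ∨ X = r2)) ∧
    ((f t, g t) = ((0:ℂ), (0:ℂ)) →
      ∀ X : ℂ, ((ξ^2/2 : ℝ) : ℂ) * X^2 - (1 - (ρ:ℂ)*(ξ:ℂ)*f t) * X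
          + g t + (f t ^ 2 - f t)/2 = 0 ↔ (X = 0 ∨ X = ((2/ξ^2 : ℝ) : ℂ))) := by
  have hξ2 : (0:ℝ) < ξ^2 := by positivity
  have hξC : ((ξ:ℂ))^2 ≠ 0 := pow_ne_zero 2 (Complex.ofReal_ne_zero.mpr hξ.ne')
  obtain ⟨y, hft⟩ : ∃ y : ℝ, f t = (y:ℂ) * Complex.I :=
    ⟨(f t).im, by apply Complex.ext <;> simp [hfre t ht]⟩
  obtain ⟨z, hgt⟩ : ∃ z : ℝ, g t = (z:ℂ) * Complex.I :=
    ⟨(g t).im, by apply Complex.ext <;> simp [hgre t ht]⟩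
  constructor
  · intro hne
    have hyz : y ≠ 0 ∨ z ≠ 0 := by
      by_contra h
      push_neg at h
      exact hne (by rw [Prod.mk.injEq, hft, hgt, h.1, h.2]; simp)
    have hρ2 : ρ^2 < 1 := by nlinarith [hρ.1, hρ.2]
    obtain ⟨a, b, ha1, hreab, h2ab⟩ : ∃ a b : ℝ, 1 < a ∧
        a^2 - b^2 = 1 + ξ^2*y^2*(1-ρ^2) ∧
        2*a*b = ξ^2*y - 2*ρ*ξ*y - 2*ξ^2*z := by
      set u : ℝ := 1 + ξ^2*y^2*(1-ρ^2) with hu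
      set v : ℝ := ξ^2*y - 2*ρ*ξ*y - 2*ξ^2*z with hv
      have hu1 : 1 ≤ u := by nlinarith [sq_nonneg (ξ*y)]
      set m : ℝ := Real.sqrt (u^2+v^2) with hm
      have hm0 : 0 ≤ m := Real.sqrt_nonneg _
      have hm2 : m^2 = u^2+v^2 := Real.sq_sqrt (by positivity)
      have hmu : u ≤ m := by nlinarith
      have hkey : 2 < m + u := by
        by_cases hy0 : y = 0
        · have hz0 : z ≠ 0 := hyz.resolve_left (not_not.mpr hy0)
          have hvz : v = -(2*ξ^2*z) := by rw [hv, hy0]; ring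
          have hv0 : v ≠ 0 := by
            rw [hvz]
            simp only [ne_eq, neg_eq_zero, mul_eq_zero, not_or]
            refine ⟨⟨by norm_num, ?_⟩, hz0⟩
            exact pow_ne_zero 2 hξ.ne'
          have hu0 : u = 1 := by rw [hu, hy0]; ring
          have : 1 < m := by nlinarith [sq_pos_of_ne_zero hv0]
          linarith
        · have : 1 < u := by
            have h1 : (0:ℝ) < y^2 := sq_pos_of_ne_zero hy0
            have h2 : (0:ℝ) < 1 - ρ^2 := by linarith
            rw [hu]
            nlinarith [mul_pos (mul_pos hξ2 h1) h2]
          linarith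
      set a : ℝ := Real.sqrt ((m+u)/2) with ha
      have ha2 : a^2 = (m+u)/2 := Real.sq_sqrt (by linarith)
      have ha0 : 0 ≤ a := Real.sqrt_nonneg _
      have ha1 : 1 < a := by nlinarith
      have hane : a ≠ 0 := by linarith
      refine ⟨a, v/(2*a), ha1, ?_, by field_simp⟩
      field_simp
      nlinarith
    have hane : a ≠ 0 := by linarith
    have h1C : ((a:ℂ))^2 - (b:ℂ)^2 = 1 + (ξ:ℂ)^2*(y:ℂ)^2*(1-(ρ:ℂ)^2) := by
      have h := congrArg (Complex.ofReal) hreab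
      push_cast at h
      exact h
    have h2C : 2*(a:ℂ)*(b:ℂ) = (ξ:ℂ)^2*(y:ℂ) - 2*(ρ:ℂ)*(ξ:ℂ)*(y:ℂ) - 2*(ξ:ℂ)^2*(z:ℂ) := by
      have h := congrArg (Complex.ofReal) h2ab
      push_cast at h
      exact h
    obtain ⟨r1, r2, hr1re, hr2re, hsum, hprod⟩ : ∃ r1 r2 : ℂ,
        r1.re < 0 ∧ 0 < r2.re ∧
        ((ξ^2/2 : ℝ) : ℂ) * (r1 + r2) = 1 - (ρ:ℂ)*(ξ:ℂ)*f t ∧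
        ((ξ^2/2 : ℝ) : ℂ) * (r1 * r2) = g t + (f t ^ 2 - f t)/2 := by
      set s : ℂ := (a:ℂ) + (b:ℂ)*Complex.I with hs
      set B : ℂ := 1 - (ρ:ℂ)*(ξ:ℂ)*((y:ℂ)*Complex.I) with hB
      have hD : (B - s) * (B + s) = (ξ:ℂ)^2 * (2*(g t) + (f t^2 - f t)) := by
        rw [hB, hs, hft, hgt]
        linear_combination (-1) * h1C - Complex.I * h2C
          + (-((b:ℂ)^2 + (ξ:ℂ)^2*(y:ℂ)^2*(1-(ρ:ℂ)^2))) * Complex.I_sq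
      refine ⟨(B - s)/((ξ:ℂ)^2), (B + s)/((ξ:ℂ)^2), ?_, ?_, ?_, ?_⟩
      · have h1 : ((B - s)/((ξ:ℂ)^2)).re = (B - s).re / ξ^2 := by
          rw [show ((ξ:ℂ)^2) = ((ξ^2:ℝ):ℂ) by push_cast; ring, Complex.div_ofReal_re]
        have h2 : (B - s).re = 1 - a := by simp [hB, hs]
        rw [h1, h2]
        apply div_neg_of_neg_of_pos (by linarith) hξ2
      · have h1 : ((B + s)/((ξ:ℂ)^2)).re = (B + s).re / ξ^2 := by
          rw [show ((ξ:ℂ)^2) = ((ξ^2:ℝ):ℂ) by push_cast; ring, Complex.div_ofReal_re]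
        have h2 : (B + s).re = 1 + a := by simp [hB, hs]
        rw [h1, h2]
        positivity
      · rw [← add_div, show B - s + (B + s) = 2*B by ring,
          show ((ξ^2/2:ℝ):ℂ) = (ξ:ℂ)^2/2 by push_cast; ring, hB, hft]
        have hξ0 : (ξ:ℂ) ≠ 0 := Complex.ofReal_ne_zero.mpr hξ.ne'
        field_simp
      · rw [div_mul_div_comm, hD, mul_div_mul_left _ _ hξC,
          show ((ξ^2/2:ℝ):ℂ) = (ξ:ℂ)^2/2 by push_cast; ring]
        have hξ0 : (ξ:ℂ) ≠ 0 := Complex.ofReal_ne_zero.mpr hξ.ne'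
        field_simp
    have hne12 : r1 ≠ r2 := by
      intro h
      rw [h] at hr1re
      linarith
    refine ⟨r1, r2, hne12, hr1re, hr2re, ?_⟩
    intro X
    have hfac : ((ξ^2/2 : ℝ) : ℂ) * X^2 - (1 - (ρ:ℂ)*(ξ:ℂ)*f t) * X
          + g t + (f t ^ 2 - f t)/2
        = ((ξ^2/2 : ℝ) : ℂ) * (X - r1) * (X - r2) := by
      linear_combination X * hsum - hprod
    rw [hfac]
    have hc0 : ((ξ^2/2 : ℝ) : ℂ) ≠ 0 := by
      simp only [ne_eq, Complex.ofReal_eq_zero]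
      positivity
    constructor
    · intro h
      rcases mul_eq_zero.mp h with h' | h'
      · rcases mul_eq_zero.mp h' with h'' | h''
        · exact absurd h'' hc0
        · exact Or.inl (sub_eq_zero.mp h'')
      · exact Or.inr (sub_eq_zero.mp h')
    · rintro (rfl | rfl)
      · rw [sub_self, mul_zero, zero_mul]
      · rw [sub_self, mul_zero]
  · intro h0
    rw [Prod.mk.injEq] at h0
    intro X
    rw [h0.1, h0.2]
    simp only [mul_zero, sub_zero, zero_sub, ne_eq, OfNat.ofNat_ne_zero,
      not_false_eq_true, zero_pow, add_zero, zero_div]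
    constructor
    · intro h
      have h' : X * (((ξ^2/2 : ℝ) : ℂ) * X - 1) = 0 := by
        push_cast at h ⊢
        linear_combination h
      rcases mul_eq_zero.mp h' with h1 | h2
      · exact Or.inl h1
      · right
        have hXeq : ((ξ^2/2 : ℝ) : ℂ) * X = 1 := by linear_combination h2
        rw [show ((2/ξ^2 : ℝ) : ℂ) = 2/((ξ:ℂ)^2) by push_cast; ring]
        rw [eq_div_iff hξC]
        push_cast at hXeq ⊢
        linear_combination 2 * hXeq
    · rintro (rfl | rfl)
      · push_cast; ring
      · rw [show ((2/ξ^2 : ℝ) : ℂ) = 2/((ξ:ℂ)^2) by push_cast; ring]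
        have hξ0 : (ξ:ℂ) ≠ 0 := Complex.ofReal_ne_zero.mpr hξ.ne'
        push_cast
        field_simp
        ring
end

section
/- Let $\xi>0$, $\rho\in(-1,1)$, $t\in[0,T]$, and $f,g:[0,T]\to\mathbb{C}$ bounded measurable with $\Re f=\Re g=0$. If $(f(t),g(t))\neq(0,0)$, then the quadratic polynomial $Q(X)=\frac{\xi^2}{2}X^2+\rho\xi f(t)X+g(t)+\frac{f^2(t)-f(t)}{2}$ has exactly two complex roots with strictly opposite-sign real parts; if $(f(t),g(t))=(0,0)$, then $Q$ has $0$ as a double root. -/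
open Set

/-- Root structure of the polynomial `Q` from the Riccati analysis. -/
theorem stmt7 (ξ ρ T t : ℝ) (hξ : 0 < ξ) (hρ : ρ ∈ Ioo (-1:ℝ) 1) (hT : 0 < T)
    (ht : t ∈ Icc (0:ℝ) T)
    (f g : ℝ → ℂ) (hfm : Measurable f) (hgm : Measurable g)
    (M : ℝ) (hbdd : ∀ s ∈ Icc (0:ℝ) T, ‖f s‖ ≤ M ∧ ‖g s‖ ≤ M)
    (hfre : ∀ s ∈ Icc (0:ℝ) T, (f s).re = 0)
    (hgre : ∀ s ∈ Icc (0:ℝ) T, (g s).re = 0) :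
    ((f t, g t) ≠ ((0:ℂ), (0:ℂ)) →
      ∃ r1 r2 : ℂ, r1 ≠ r2 ∧ r1.re < 0 ∧ 0 < r2.re ∧
        ∀ X : ℂ, ((ξ^2/2 : ℝ) : ℂ) * X^2 + (ρ:ℂ)*(ξ:ℂ)*f t * X
            + g t + (f t ^ 2 - f t)/2 = 0 ↔ (X = r1 ∨ X = r2)) ∧
    ((f t, g t) = ((0:ℂ), (0:ℂ)) →
      ∀ X : ℂ, ((ξ^2/2 : ℝ) : ℂ) * X^2 + (ρ:ℂ)*(ξ:ℂ)*f t * X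
          + g t + (f t ^ 2 - f t)/2 = ((ξ^2/2 : ℝ) : ℂ) * X^2) := by
  obtain ⟨hρ1, hρ2⟩ := hρ
  have hρsq : ρ ^ 2 < 1 := by nlinarith
  constructor
  · intro hne
    have hfre' : (f t).re = 0 := hfre t ht
    have hgre' : (g t).re = 0 := hgre t ht
    set a := (f t).im with ha
    set b := (g t).im with hb
    have hf : f t = Complex.I * (a : ℂ) := by
      apply Complex.ext <;> simp [hfre', ha]
    have hg : g t = Complex.I * (b : ℂ) := by
      apply Complex.ext <;> simp [hgre', hb]
    have hab : ¬(a = 0 ∧ b = 0) := by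
      rintro ⟨ha0, hb0⟩
      apply hne
      rw [hf, hg, ha0, hb0]
      simp
    set D : ℂ := (ρ:ℂ)^2 * (f t)^2 - 2*(g t) - (f t)^2 + f t with hDdef
    have hD : D = ((1-ρ^2)*a^2 : ℝ) + Complex.I * ((a - 2*b : ℝ)) := by
      rw [hDdef, hf, hg]
      push_cast
      ring_nf
      rw [Complex.I_sq]
      ring
    have hDre : D.re = (1-ρ^2)*a^2 := by
      rw [hD]
      simp only [Complex.add_re, Complex.ofReal_re, Complex.mul_re,
        Complex.I_re, Complex.I_im, Complex.ofReal_im]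
      ring
    have hDim : D.im = a - 2*b := by
      rw [hD]
      simp only [Complex.add_im, Complex.ofReal_im, Complex.mul_im,
        Complex.I_re, Complex.I_im, Complex.ofReal_re]
      ring
    obtain ⟨w, hw⟩ : ∃ w : ℂ, w^2 = D :=
      IsAlgClosed.exists_pow_nat_eq D (n := 2) (by norm_num)
    have hwre : w.re ≠ 0 := by
      intro h0
      have h1 : (w^2).im = 0 := by
        rw [pow_two, Complex.mul_im, h0]; ring
      have h2 : (w^2).re ≤ 0 := by
        rw [pow_two, Complex.mul_re, h0]; nlinarith [sq_nonneg w.im]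
      rw [hw, hDim] at h1
      rw [hw, hDre] at h2
      have ha0 : a = 0 := by
        by_contra hcon
        have h3 : 0 < (1 - ρ^2) * a^2 :=
          mul_pos (by nlinarith) (by positivity)
        linarith
      have hb0 : b = 0 := by linarith
      exact hab ⟨ha0, hb0⟩
    set w' : ℂ := if 0 < w.re then w else -w with hw'def
    have hw'sq : w'^2 = D := by
      rw [hw'def]; split <;> simp [hw]
    have hw're : 0 < w'.re := by
      rw [hw'def]; split
      · assumption
      · simp only [Complex.neg_re]
        rcases lt_trichotomy w.re 0 with h | h | h
        · linarith
        · exact absurd h hwre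
        · linarith [‹¬0 < w.re› h]
    set r1 : ℂ := (-(ρ:ℂ) * f t - w') / (ξ:ℂ) with hr1
    set r2 : ℂ := (-(ρ:ℂ) * f t + w') / (ξ:ℂ) with hr2
    have hξC : (ξ:ℂ) ≠ 0 := by exact_mod_cast hξ.ne'
    have hre1 : r1.re = -w'.re / ξ := by
      rw [hr1, Complex.div_ofReal_re]
      congr 1
      simp [Complex.sub_re, Complex.mul_re, hfre']
    have hre2 : r2.re = w'.re / ξ := by
      rw [hr2, Complex.div_ofReal_re]
      congr 1
      simp [Complex.add_re, Complex.mul_re, hfre']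
    have h1 : r1.re < 0 := by
      rw [hre1]
      exact div_neg_of_neg_of_pos (by linarith) hξ
    have h2 : 0 < r2.re := by
      rw [hre2]
      positivity
    refine ⟨r1, r2, ?_, h1, h2, ?_⟩
    · intro h
      rw [h] at h1
      linarith
    · intro X
      have key : ((ξ^2/2 : ℝ) : ℂ) * X^2 + (ρ:ℂ)*(ξ:ℂ)*f t * X
            + g t + (f t ^ 2 - f t)/2
          = ((ξ^2/2 : ℝ) : ℂ) * ((X - r1) * (X - r2)) := by
        rw [hr1, hr2]
        have hD' : w'^2 = (ρ:ℂ)^2 * (f t)^2 - 2*(g t) - (f t)^2 + f t := hw'sq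
        field_simp
        push_cast
        linear_combination ((ξ:ℂ)^2) * hD'
      rw [key]
      have hc : ((ξ^2/2 : ℝ) : ℂ) ≠ 0 := by
        simp only [ne_eq, Complex.ofReal_eq_zero]
        positivity
      rw [mul_eq_zero, mul_eq_zero, sub_eq_zero, sub_eq_zero, or_iff_right hc]
  · rintro h
    rw [Prod.mk.injEq] at h
    obtain ⟨hf0, hg0⟩ := h
    intro X
    rw [hf0, hg0]
    ring
end

section
/- Let $\xi>0$, $\rho\in(-1,1)$, and let $f,g:[0,T]\to\mathbb{C}$ be bounded measurable with $\Re f=\Re g=0$. Define $\psi_0(s) = -\xi^{-1}(\rho f(s)+\sqrt{f(s)(1-(1-\rho^2)f(s))-2g(s)})$ (principal square root) and $E=\{s\in[0,T]: (f(s),g(s))\neq(0,0)\}$. Then there exists a finite constant $C>0$ such that $|\psi_0(s)|/(-\Re\psi_0(s)) \le C$ for all $s\in E$; in particular $\Re\psi_0(s)<0$ on $E$. -/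
open Set

/-- `ψ₀` in the regime `H < -1/2` (principal square root via `cpow (1/2)`). -/
noncomputable def psi0NL (ξ ρ : ℝ) (f g : ℝ → ℂ) (s : ℝ) : ℂ :=
  -((ξ:ℂ))⁻¹ * ((ρ:ℂ) * f s
    + (f s * (1 - (1 - (ρ:ℂ)^2) * f s) - 2 * g s) ^ ((1:ℂ)/2))

lemma sqrt_re_ge' (z : ℂ) (hz : z ≠ 0) (hre : 0 ≤ z.re) :
    Real.sqrt 2 / 2 * ‖z ^ ((1:ℂ)/2)‖ ≤ (z ^ ((1:ℂ)/2)).re := by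
  rw [Complex.cpow_def_of_ne_zero hz, Complex.exp_re, Complex.norm_exp]
  have him : (Complex.log z * ((1:ℂ)/2)).im = z.arg / 2 := by
    simp [Complex.log_im, Complex.mul_im, Complex.div_re, Complex.div_im]
    ring
  rw [him]
  have harg : |z.arg| ≤ Real.pi/2 := Complex.abs_arg_le_pi_div_two_iff.mpr hre
  have h1 : |z.arg / 2| ≤ Real.pi/4 := by
    rw [abs_div, show |(2:ℝ)| = 2 by norm_num]; linarith
  have hcos : Real.sqrt 2 / 2 ≤ Real.cos (z.arg / 2) := by
    rw [← Real.cos_pi_div_four, ← Real.cos_abs (z.arg/2)]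
    exact Real.cos_le_cos_of_nonneg_of_le_pi (abs_nonneg _) (by linarith [Real.pi_pos]) h1
  have := Real.exp_pos (Complex.log z * ((1:ℂ)/2)).re
  nlinarith

/-- Boundedness of the ratio `|ψ₀|/(-Re ψ₀)` on the set where `(f,g) ≠ (0,0)`. -/
theorem stmt9 (ξ ρ T : ℝ) (hξ : 0 < ξ) (hρ : ρ ∈ Ioo (-1:ℝ) 1) (hT : 0 < T)
    (f g : ℝ → ℂ) (hfm : Measurable f) (hgm : Measurable g)
    (M : ℝ) (hbdd : ∀ s ∈ Icc (0:ℝ) T, ‖f s‖ ≤ M ∧ ‖g s‖ ≤ M)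
    (hfre : ∀ s ∈ Icc (0:ℝ) T, (f s).re = 0)
    (hgre : ∀ s ∈ Icc (0:ℝ) T, (g s).re = 0) :
    ∃ C : ℝ, 0 < C ∧ ∀ s ∈ Icc (0:ℝ) T, (f s, g s) ≠ ((0:ℂ), (0:ℂ)) →
      (psi0NL ξ ρ f g s).re < 0 ∧
      ‖psi0NL ξ ρ f g s‖ / (-(psi0NL ξ ρ f g s).re) ≤ C := by
  obtain ⟨hρ1, hρ2⟩ := hρ
  have hρsq : (0:ℝ) < 1 - ρ^2 := by nlinarith
  have hs1 : (0:ℝ) < Real.sqrt (1 - ρ^2) := Real.sqrt_pos.mpr hρsq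
  set K : ℝ := |ρ| / Real.sqrt (1 - ρ^2) with hK
  have hK0 : 0 ≤ K := by positivity
  refine ⟨Real.sqrt 2 * (K + 1), by positivity, ?_⟩
  intro s hs hne
  set x := (f s).im with hx
  set y := (g s).im with hy
  have hfx : f s = (x:ℂ) * Complex.I := by
    apply Complex.ext <;> simp [hfre s hs, hx]
  have hgy : g s = (y:ℂ) * Complex.I := by
    apply Complex.ext <;> simp [hgre s hs, hy]
  set z := f s * (1 - (1 - (ρ:ℂ)^2) * f s) - 2 * g s with hzdef
  obtain ⟨a, ha⟩ : ∃ a:ℝ, a = (1-ρ^2)*x^2 := ⟨_, rfl⟩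
  obtain ⟨b, hb⟩ : ∃ b:ℝ, b = x - 2*y := ⟨_, rfl⟩
  have hz : z = (a : ℂ) + (b : ℂ) * Complex.I := by
    rw [hzdef, hfx, hgy, ha, hb]
    push_cast
    linear_combination (-(1-(ρ:ℂ)^2)*(x:ℂ)^2) * Complex.I_sq
  have hzre : z.re = (1-ρ^2)*x^2 := by rw [hz, ← ha]; simp
  have hzim : z.im = x - 2*y := by rw [hz, ← hb]; simp
  have hz0 : z ≠ 0 := by
    intro h
    have h1 : (1-ρ^2)*x^2 = 0 := by rw [← hzre, h]; simp
    have hx0 : x = 0 := by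
      rcases mul_eq_zero.mp h1 with h' | h'
      · linarith
      · exact pow_eq_zero_iff (by norm_num) |>.mp h'
    have h2 : x - 2*y = 0 := by rw [← hzim, h]; simp
    have hy0 : y = 0 := by linarith
    apply hne
    rw [hfx, hgy, hx0, hy0]; simp
  set w := z ^ ((1:ℂ)/2) with hw
  have hw0 : w ≠ 0 := by
    rw [hw]
    simp only [ne_eq, Complex.cpow_eq_zero_iff, not_and_or]
    exact Or.inl hz0
  have habsw_pos : 0 < ‖w‖ := norm_pos_iff.mpr hw0
  have hrew : Real.sqrt 2 / 2 * ‖w‖ ≤ w.re :=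
    sqrt_re_ge' z hz0 (by rw [hzre]; positivity)
  have hwre_pos : 0 < w.re := lt_of_lt_of_le (by positivity) hrew
  have h2 : Real.sqrt 2 * Real.sqrt 2 = 2 := Real.mul_self_sqrt (by norm_num)
  have hwle : ‖w‖ ≤ Real.sqrt 2 * w.re := by nlinarith [Real.sqrt_nonneg 2]
  -- |w| ≥ √(1-ρ²) |x|
  have habsz : (1-ρ^2)*x^2 ≤ ‖z‖ := le_trans (le_of_eq hzre.symm) (Complex.re_le_norm z)
  have habsw_eq : ‖w‖ = ‖z‖ ^ ((1:ℝ)/2) := by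
    rw [hw, Complex.norm_cpow_of_ne_zero hz0]
    simp
  have hxle : Real.sqrt (1-ρ^2) * |x| ≤ ‖w‖ := by
    rw [habsw_eq]
    have : ((1-ρ^2)*x^2 : ℝ) ^ ((1:ℝ)/2) ≤ ‖z‖ ^ ((1:ℝ)/2) :=
      Real.rpow_le_rpow (by positivity) habsz (by norm_num)
    calc Real.sqrt (1-ρ^2) * |x| = ((1-ρ^2)*x^2 : ℝ) ^ ((1:ℝ)/2) := by
          rw [← Real.sqrt_eq_rpow, Real.sqrt_mul hρsq.le, Real.sqrt_sq_eq_abs]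
      _ ≤ _ := this
  -- compute re and norm of psi0
  have hxin : ((ξ:ℂ))⁻¹ = ((ξ⁻¹ : ℝ) : ℂ) := by push_cast; ring
  have hpsi : psi0NL ξ ρ f g s = (((-ξ⁻¹ : ℝ)) : ℂ) * ((ρ:ℂ) * f s + w) := by
    rw [psi0NL, hxin]; push_cast; ring
  have hre_psi : (psi0NL ξ ρ f g s).re = -ξ⁻¹ * ((ρ:ℝ) * (f s).re + w.re) := by
    rw [hpsi, Complex.re_ofReal_mul, Complex.add_re, Complex.re_ofReal_mul]
  have hre_psi' : (psi0NL ξ ρ f g s).re = -(ξ⁻¹ * w.re) := by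
    rw [hre_psi, hfre s hs]; ring
  have hξinv : (0:ℝ) < ξ⁻¹ := by positivity
  constructor
  · rw [hre_psi']; nlinarith
  · rw [hre_psi', neg_neg, hpsi]
    rw [norm_mul]
    have hnr : ‖(((-ξ⁻¹ : ℝ)) : ℂ)‖ = ξ⁻¹ := by
      rw [Complex.norm_real, Real.norm_eq_abs, abs_neg, abs_of_pos hξinv]
    rw [hnr, mul_div_mul_left _ _ (ne_of_gt hξinv)]
    rw [div_le_iff₀ hwre_pos]
    have hN : ‖(ρ:ℂ) * f s + w‖ ≤ |ρ| * |x| + ‖w‖ := by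
      calc ‖(ρ:ℂ) * f s + w‖ ≤ ‖(ρ:ℂ) * f s‖ + ‖w‖ := norm_add_le _ _
        _ = |ρ| * |x| + ‖w‖ := by
            rw [norm_mul, Complex.norm_real, Real.norm_eq_abs, hfx, norm_mul,
              Complex.norm_real, Real.norm_eq_abs, Complex.norm_I, mul_one]
    have hrx : |ρ| * |x| ≤ K * ‖w‖ := by
      have : |ρ| = K * Real.sqrt (1-ρ^2) := by
        rw [hK, div_mul_cancel₀]; exact ne_of_gt hs1
      rw [this, mul_assoc]
      exact mul_le_mul_of_nonneg_left hxle hK0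
    have hfinal : ‖(ρ:ℂ) * f s + w‖ ≤ (K+1) * ‖w‖ := by
      have := hN.trans (add_le_add_left hrx _)
      linarith
    calc ‖(ρ:ℂ) * f s + w‖ ≤ (K+1) * ‖w‖ := hfinal
      _ ≤ (K+1) * (Real.sqrt 2 * w.re) := mul_le_mul_of_nonneg_left hwle (by positivity)
      _ = Real.sqrt 2 * (K+1) * w.re := by ring
end

section
/- Let $\psi_0:[0,T]\to\mathbb{C}$ be of bounded variation and, for $\epsilon>0$, let $\beta_\epsilon:[0,T]\to\mathbb{C}$ be measurable with $\Re\beta_\epsilon\le 0$. Define $\mathbf{II}_\epsilon(t)=-\int_0^t e^{\epsilon^{-1}\int_s^t\beta_\epsilon(r)dr}e^{-(t-s)/\epsilon}d\psi_0(s)$ (Riemann–Stieltjes integral). Then $|\int_0^T\mathbf{II}_\epsilon(t)dt| \le \int_0^T \epsilon(1-e^{-(T-s)/\epsilon})|d\psi_0(s)| \to 0$ as $\epsilon\to 0$, where $|d\psi_0|$ denotes the total variation measure of $\psi_0$. -/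
open MeasureTheory Set Filter

lemma aux_ftc (ε s T' : ℝ) (hε : 0 < ε) :
    ∫ t in s..T', Real.exp (-(t - s)/ε) = ε * (1 - Real.exp (-(T' - s)/ε)) := by
  have key : ∀ t : ℝ, HasDerivAt (fun u => -ε * Real.exp (-(u - s)/ε)) (Real.exp (-(t - s)/ε)) t := by
    intro t
    have h1 : HasDerivAt (fun u : ℝ => -(u - s)/ε) (-1/ε) t := by
      simpa using (((hasDerivAt_id t).sub_const s).neg.div_const ε)
    have h2 := (h1.exp).const_mul (-ε)
    refine h2.congr_deriv ?_
    field_simp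
  have := intervalIntegral.integral_deriv_eq_sub' (fun u => -ε * Real.exp (-(u - s)/ε))
    (f' := fun t => Real.exp (-(t - s)/ε)) (a := s) (b := T')
    (by funext t; exact (key t).deriv) (fun t _ => (key t).differentiableAt)
    (by apply Continuous.continuousOn; continuity)
  rw [this]
  simp
  ring

lemma aux_norm_exp (ε : ℝ) (hε : 0 < ε) (β' : ℝ → ℂ) (s t : ℝ) (hst : s ≤ t)
    (hre : ∀ r ∈ Set.Ioc s t, (β' r).re ≤ 0) :
    ‖Complex.exp ((ε⁻¹ : ℝ) * ∫ r in s..t, β' r)‖ ≤ 1 := by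
  rw [Complex.norm_exp, Real.exp_le_one_iff]
  have hre' : ((ε⁻¹ : ℝ) * ∫ r in s..t, β' r : ℂ).re = ε⁻¹ * (∫ r in s..t, β' r).re := by
    simp
  rw [hre']
  apply mul_nonpos_of_nonneg_of_nonpos (by positivity)
  rw [intervalIntegral.integral_of_le hst]
  by_cases h : IntegrableOn β' (Set.Ioc s t) volume
  · rw [← RCLike.re_to_complex, ← integral_re h]
    apply integral_nonpos_of_ae
    filter_upwards [ae_restrict_mem measurableSet_Ioc] with r hr
    exact hre r hr
  · rw [integral_undef h]; simp

set_option maxHeartbeats 1000000 in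
/-- Vanishing of the Stieltjes term `II_ε`.  The bounded-variation function `ψ₀` is
encoded through its total variation measure `σ` and a density `φ` of unit modulus,
so that `∫ h dψ₀ = ∫ h·φ dσ`. -/
theorem stmt17 (T : ℝ) (hT : 0 < T)
    (σ : Measure ℝ) [IsFiniteMeasure σ] (hσsupp : σ (Icc (0:ℝ) T)ᶜ = 0)
    (φ : ℝ → ℂ) (hφm : Measurable φ) (hφ : ∀ᵐ s ∂σ, ‖φ s‖ = 1)
    (β : ℝ → ℝ → ℂ) (hβm : ∀ ε, Measurable (β ε))
    (hβre : ∀ ε : ℝ, 0 < ε → ∀ r ∈ Icc (0:ℝ) T, (β ε r).re ≤ 0) :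
    (∀ ε : ℝ, 0 < ε →
      ‖∫ t in (0:ℝ)..T,
          (-(∫ s in Icc (0:ℝ) t, Complex.exp ((ε⁻¹ : ℝ) * ∫ r in s..t, β ε r)
              * ((Real.exp (-(t - s) / ε) : ℝ) : ℂ) * φ s ∂σ))‖
        ≤ ∫ s in Icc (0:ℝ) T, ε * (1 - Real.exp (-(T - s) / ε)) ∂σ) ∧
    Tendsto (fun ε : ℝ => ∫ s in Icc (0:ℝ) T, ε * (1 - Real.exp (-(T - s) / ε)) ∂σ)
      (nhdsWithin 0 (Ioi 0)) (nhds 0) := by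
  have hσae : ∀ᵐ s ∂σ, s ∈ Icc (0:ℝ) T := by
    rw [ae_iff]
    simpa [compl_def] using hσsupp
  constructor
  · intro ε hε
    set F : ℝ → ℂ := fun t => ∫ s in Icc (0:ℝ) t, Complex.exp ((ε⁻¹ : ℝ) * ∫ r in s..t, β ε r)
              * ((Real.exp (-(t - s) / ε) : ℝ) : ℂ) * φ s ∂σ with hF
    set G : ℝ → ℝ := fun t => ∫ s in Icc (0:ℝ) t, Real.exp (-(t - s)/ε) ∂σ with hGdef
    set RHS : ℝ := ∫ s in Icc (0:ℝ) T, ε * (1 - Real.exp (-(T - s) / ε)) ∂σ with hRHS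
    have hbound_int : ∀ t : ℝ, Integrable (fun s => Real.exp (-(t - s)/ε))
        (σ.restrict (Icc (0:ℝ) t)) := by
      intro t
      refine (integrable_const (1:ℝ)).mono'
        ((Real.continuous_exp.comp
          (((continuous_const.sub continuous_id).neg).div_const ε)).aestronglyMeasurable) ?_
      filter_upwards [ae_restrict_mem measurableSet_Icc] with s hs
      rw [Real.norm_eq_abs, abs_of_pos (Real.exp_pos _)]
      apply Real.exp_le_one_iff.2
      have h1 : s ≤ t := hs.2
      apply div_nonpos_of_nonpos_of_nonneg <;> linarith
    have step2 : ∀ t ∈ Ioc (0:ℝ) T, ‖F t‖ ≤ G t := by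
      intro t ht
      apply norm_integral_le_of_norm_le (hbound_int t)
      filter_upwards [ae_restrict_mem measurableSet_Icc, ae_restrict_of_ae hφ] with s hs hφs
      rw [norm_mul, norm_mul, hφs, mul_one, Complex.norm_real, Real.norm_eq_abs,
        abs_of_pos (Real.exp_pos _)]
      have h1 : ‖Complex.exp ((ε⁻¹ : ℝ) * ∫ r in s..t, β ε r)‖ ≤ 1 := by
        apply aux_norm_exp ε hε _ s t hs.2
        intro r hr
        exact hβre ε hε r ⟨le_trans hs.1 hr.1.le, le_trans hr.2 ht.2⟩
      calc ‖Complex.exp ((ε⁻¹ : ℝ) * ∫ r in s..t, β ε r)‖ * Real.exp (-(t - s)/ε)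
          ≤ 1 * Real.exp (-(t - s)/ε) := by
            apply mul_le_mul_of_nonneg_right h1 (Real.exp_pos _).le
        _ = Real.exp (-(t - s)/ε) := one_mul _
    set H : ℝ → ℝ → ENNReal := fun t s =>
      (Icc (0:ℝ) t).indicator (fun s => ENNReal.ofReal (Real.exp (-(t - s)/ε))) s with hH
    have hHmeas : Measurable (Function.uncurry H) := by
      have heq : Function.uncurry H = fun p : ℝ × ℝ =>
          if p.2 ∈ Icc (0:ℝ) p.1 then ENNReal.ofReal (Real.exp (-(p.1 - p.2)/ε)) else 0 := by
        funext p
        simp [Function.uncurry, hH, Set.indicator_apply]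
      rw [heq]
      apply Measurable.ite
      · have hset : {p : ℝ × ℝ | p.2 ∈ Icc (0:ℝ) p.1} =
            {p : ℝ × ℝ | 0 ≤ p.2} ∩ {p : ℝ × ℝ | p.2 ≤ p.1} := by
          ext p; simp [mem_Icc]
        rw [hset]
        exact (measurableSet_le measurable_const measurable_snd).inter
          (measurableSet_le measurable_snd measurable_fst)
      · exact ENNReal.measurable_ofReal.comp (Real.measurable_exp.comp
          (((measurable_fst.sub measurable_snd).neg).div_const ε))
      · exact measurable_const
    have hGof : ∀ t ∈ Ioc (0:ℝ) T, ENNReal.ofReal (G t) = ∫⁻ s, H t s ∂σ := by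
      intro t _
      rw [hGdef]
      rw [ofReal_integral_eq_lintegral_ofReal (hbound_int t)
        (Filter.Eventually.of_forall fun s => (Real.exp_pos _).le)]
      exact (lintegral_indicator measurableSet_Icc _).symm
    have hinner : ∀ s ∈ Icc (0:ℝ) T,
        (∫⁻ t in Ioc (0:ℝ) T, H t s ∂volume)
          = ENNReal.ofReal (ε * (1 - Real.exp (-(T - s)/ε))) := by
      intro s hs
      have h1 : ∀ t : ℝ, H t s = (Ici s).indicator
          (fun t => ENNReal.ofReal (Real.exp (-(t - s)/ε))) t := by
        intro t
        simp [hH, Set.indicator_apply, mem_Icc, mem_Ici, hs.1]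
      calc (∫⁻ t in Ioc (0:ℝ) T, H t s ∂volume)
          = ∫⁻ t in Ioc (0:ℝ) T, (Ici s).indicator
              (fun t => ENNReal.ofReal (Real.exp (-(t - s)/ε))) t ∂volume :=
            lintegral_congr fun t => h1 t
        _ = ∫⁻ t in Ici s ∩ Ioc (0:ℝ) T, ENNReal.ofReal (Real.exp (-(t - s)/ε)) ∂volume := by
            rw [lintegral_indicator measurableSet_Ici,
              Measure.restrict_restrict measurableSet_Ici]
        _ = ∫⁻ t in Ioc s T, ENNReal.ofReal (Real.exp (-(t - s)/ε)) ∂volume := by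
            apply setLIntegral_congr
            have hne : ∀ᵐ t : ℝ ∂volume, t ≠ s := by
              rw [ae_iff]
              simpa using Real.volume_singleton (a := s)
            filter_upwards [hne] with t ht
            simp only [mem_inter_iff, mem_Ici, mem_Ioc, eq_iff_iff]
            constructor
            · rintro ⟨ha, hb, hc⟩
              exact ⟨lt_of_le_of_ne ha (Ne.symm ht), hc⟩
            · rintro ⟨ha, hb⟩
              exact ⟨ha.le, lt_of_le_of_lt hs.1 ha, hb⟩
        _ = ENNReal.ofReal (∫ t in Ioc s T, Real.exp (-(t - s)/ε) ∂volume) := by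
            rw [ofReal_integral_eq_lintegral_ofReal]
            · refine (integrable_const (1:ℝ)).mono'
                ((Real.continuous_exp.comp
                  (((continuous_id.sub continuous_const).neg).div_const ε)).aestronglyMeasurable) ?_
              filter_upwards [ae_restrict_mem measurableSet_Ioc] with t ht
              rw [Real.norm_eq_abs, abs_of_pos (Real.exp_pos _)]
              apply Real.exp_le_one_iff.2
              have h2 : s < t := ht.1
              apply div_nonpos_of_nonpos_of_nonneg <;> linarith
            · exact Filter.Eventually.of_forall fun t => (Real.exp_pos _).le
        _ = ENNReal.ofReal (ε * (1 - Real.exp (-(T - s)/ε))) := by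
            rw [← intervalIntegral.integral_of_le hs.2, aux_ftc ε s T hε]
    have hσr : σ.restrict (Icc (0:ℝ) T) = σ :=
      Measure.restrict_eq_self_of_ae_mem hσae
    have hRHSint : Integrable (fun s => ε * (1 - Real.exp (-(T - s)/ε))) σ := by
      refine (integrable_const ε).mono'
        ((continuous_const.mul (continuous_const.sub
          (Real.continuous_exp.comp
            (((continuous_const.sub continuous_id).neg).div_const ε)))).aestronglyMeasurable) ?_
      filter_upwards [hσae] with s hs
      have h1 := Real.exp_le_one_iff.2 (show -(T - s)/ε ≤ 0 by
        apply div_nonpos_of_nonpos_of_nonneg <;> [linarith [hs.2]; linarith])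
      have h2 := Real.exp_pos (-(T - s)/ε)
      rw [Real.norm_eq_abs,
        abs_of_nonneg (show (0:ℝ) ≤ ε * (1 - Real.exp (-(T - s)/ε)) by nlinarith)]
      nlinarith
    have hRHSnonneg : 0 ≤ RHS := by
      rw [hRHS]
      apply integral_nonneg_of_ae
      filter_upwards [ae_restrict_mem measurableSet_Icc] with s hs
      have h1 := Real.exp_le_one_iff.2 (show -(T - s)/ε ≤ 0 by
        apply div_nonpos_of_nonpos_of_nonneg <;> [linarith [hs.2]; linarith])
      simp only [Pi.zero_apply]
      nlinarith
    have hRHSof : ENNReal.ofReal RHS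
        = ∫⁻ s, ENNReal.ofReal (ε * (1 - Real.exp (-(T - s)/ε))) ∂σ := by
      rw [hRHS, ofReal_integral_eq_lintegral_ofReal (hRHSint.restrict)
        (ae_restrict_of_ae (by
          filter_upwards [hσae] with s hs
          have h1 := Real.exp_le_one_iff.2 (show -(T - s)/ε ≤ 0 by
            apply div_nonpos_of_nonpos_of_nonneg <;> [linarith [hs.2]; linarith])
          simp only [Pi.zero_apply]
          nlinarith))]
      rw [hσr]
    have key : (∫⁻ t in Ioc (0:ℝ) T, ENNReal.ofReal ‖F t‖ ∂volume) ≤ ENNReal.ofReal RHS := by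
      calc (∫⁻ t in Ioc (0:ℝ) T, ENNReal.ofReal ‖F t‖ ∂volume)
          ≤ ∫⁻ t in Ioc (0:ℝ) T, ∫⁻ s, H t s ∂σ ∂volume := by
            apply lintegral_mono_ae
            filter_upwards [ae_restrict_mem measurableSet_Ioc] with t ht
            rw [← hGof t ht]
            exact ENNReal.ofReal_le_ofReal (step2 t ht)
        _ = ∫⁻ s, ∫⁻ t in Ioc (0:ℝ) T, H t s ∂volume ∂σ :=
            lintegral_lintegral_swap hHmeas.aemeasurable
        _ = ∫⁻ s, ENNReal.ofReal (ε * (1 - Real.exp (-(T - s)/ε))) ∂σ := by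
            apply lintegral_congr_ae
            filter_upwards [hσae] with s hs
            exact hinner s hs
        _ = ENNReal.ofReal RHS := hRHSof.symm
    calc ‖∫ t in (0:ℝ)..T, (-(F t))‖
        = ‖∫ t in Ioc (0:ℝ) T, (-(F t)) ∂volume‖ := by
          rw [intervalIntegral.integral_of_le hT.le]
      _ ≤ (∫⁻ t in Ioc (0:ℝ) T, ENNReal.ofReal ‖-(F t)‖ ∂volume).toReal :=
          norm_integral_le_lintegral_norm _
      _ = (∫⁻ t in Ioc (0:ℝ) T, ENNReal.ofReal ‖F t‖ ∂volume).toReal := by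
          simp only [norm_neg]
      _ ≤ RHS := ENNReal.toReal_le_of_le_ofReal hRHSnonneg key
  · have hC : Tendsto (fun ε : ℝ => ε * (σ (Icc (0:ℝ) T)).toReal)
        (nhdsWithin 0 (Ioi 0)) (nhds 0) := by
      have h := (continuous_id.mul
        (continuous_const (y := (σ (Icc (0:ℝ) T)).toReal))).tendsto 0
      simp only [Pi.mul_apply, id_eq, zero_mul] at h
      exact h.mono_left nhdsWithin_le_nhds
    apply squeeze_zero_norm' _ hC
    filter_upwards [self_mem_nhdsWithin] with ε hε
    have hε' : (0:ℝ) < ε := hε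
    have hmeas : AEStronglyMeasurable (fun s : ℝ => ε * (1 - Real.exp (-(T - s)/ε)))
        (σ.restrict (Icc (0:ℝ) T)) := Continuous.aestronglyMeasurable (by fun_prop)
    refine norm_setIntegral_le_of_norm_le_const (μ := σ) (s := Icc (0:ℝ) T)
      (f := fun s => ε * (1 - Real.exp (-(T - s)/ε))) (C := ε)
      (measure_lt_top σ _) ?_
    intro s hs
    have h1 := Real.exp_le_one_iff.2 (show -(T - s)/ε ≤ 0 by
      apply div_nonpos_of_nonpos_of_nonneg <;> [linarith [hs.2]; linarith])
    have h2 := Real.exp_pos (-(T - s)/ε)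
    rw [Real.norm_eq_abs, abs_of_nonneg (by nlinarith)]
    nlinarith
end
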